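/- arXiv:2209.09064 — 8 statements merged into one kernel-verified Lean document; each statement's English description precedes it below -/
import Mathlib

section
/- Let n, k be natural numbers, H : ℝⁿ × ℝⁿ → ℝ be differentiable, B : ℝⁿ → Matrix (Fin n) (Fin n) ℝ be such that B(q) is antisymmetric for every q, and η : Fin k → ℝⁿ → ℝⁿ be a family of covector fields. Suppose q, p : ℝ → ℝⁿ are differentiable curves and λ : Fin k → ℝ → ℝ are multiplier functions such that for all t: (i) q'(t) = ∇ₚH(q(t), p(t)); (ii) p'(t) = −∇_q H(q(t), p(t)) − B(q(t)) · q'(t) + Σᵢ λᵢ(t) ηᵢ(q(t)); and (iii) ⟨ηᵢ(q(t)), q'(t)⟩ = 0 for every i ∈ Fin k. Then the function t ↦ H(q(t), p(t)) is constant. -/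
/-- Energy conservation for magnetic nonholonomic systems (coordinate form):
for any antisymmetric magnetic matrix field `B`, the Hamiltonian `H` is preserved
along solutions of `i_X ω_B = dH + λⁱ ηᵢ` with constraints `⟨ηᵢ(q), q̇⟩ = 0`. -/
theorem magnetic_nonholonomic_energy_conservation
    (n k : ℕ)
    (H : (Fin n → ℝ) × (Fin n → ℝ) → ℝ) (hH : Differentiable ℝ H)
    (B : (Fin n → ℝ) → Matrix (Fin n) (Fin n) ℝ)
    (hB : ∀ a i j, B a j i = - B a i j)
    (η : Fin k → (Fin n → ℝ) → (Fin n → ℝ))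
    (q p : ℝ → (Fin n → ℝ)) (hq : Differentiable ℝ q) (hp : Differentiable ℝ p)
    (lam : Fin k → ℝ → ℝ)
    (h1 : ∀ t i, deriv (fun s => q s i) t = fderiv ℝ H (q t, p t) (0, Pi.single i 1))
    (h2 : ∀ t i, deriv (fun s => p s i) t =
        - fderiv ℝ H (q t, p t) (Pi.single i 1, 0)
        - ∑ j, B (q t) i j * deriv (fun s => q s j) t
        + ∑ a, lam a t * η a (q t) i)
    (h3 : ∀ t i, ∑ j, η i (q t) j * deriv (fun s => q s j) t = 0) :
    ∀ s t, H (q s, p s) = H (q t, p t) := by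
  intro s t
  have hcomp : Differentiable ℝ (fun s => H (q s, p s)) := hH.comp (hq.prodMk hp)
  refine is_const_of_deriv_eq_zero hcomp (fun t => ?_) s t
  have hq' : HasDerivAt q (deriv q t) t := (hq t).hasDerivAt
  have hp' : HasDerivAt p (deriv p t) t := (hp t).hasDerivAt
  have hpair : HasDerivAt (fun s => (q s, p s)) (deriv q t, deriv p t) t := hq'.prodMk hp'
  have hD : HasDerivAt (fun s => H (q s, p s))
      (fderiv ℝ H (q t, p t) (deriv q t, deriv p t)) t :=
    (hH (q t, p t)).hasFDerivAt.comp_hasDerivAt t hpair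
  rw [hD.deriv]
  set D := fderiv ℝ H (q t, p t) with hDdef
  have hqd : ∀ i, deriv (fun s => q s i) t = deriv q t i := fun i =>
    ((hasDerivAt_pi.mp hq') i).deriv
  have hpd : ∀ i, deriv (fun s => p s i) t = deriv p t i := fun i =>
    ((hasDerivAt_pi.mp hp') i).deriv
  have hsplit : ((deriv q t, deriv p t) : (Fin n → ℝ) × (Fin n → ℝ))
      = (∑ i, deriv q t i • ((Pi.single i 1 : Fin n → ℝ), (0 : Fin n → ℝ)))
        + ∑ i, deriv p t i • ((0 : Fin n → ℝ), (Pi.single i 1 : Fin n → ℝ)) := by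
    ext j <;> simp [Prod.fst_sum, Prod.snd_sum, Pi.single_apply, Finset.sum_ite_eq']
  rw [hsplit]
  have expand : D ((∑ i, deriv q t i • ((Pi.single i 1 : Fin n → ℝ), (0 : Fin n → ℝ)))
        + ∑ i, deriv p t i • ((0 : Fin n → ℝ), (Pi.single i 1 : Fin n → ℝ)))
      = (∑ i, deriv q t i * D (Pi.single i 1, 0))
        + ∑ i, deriv p t i * D (0, Pi.single i 1) := by
    rw [map_add, map_sum, map_sum]
    congr 1
    · exact Finset.sum_congr rfl fun i _ => by rw [map_smul, smul_eq_mul]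
    · exact Finset.sum_congr rfl fun i _ => by rw [map_smul, smul_eq_mul]
  rw [expand]
  have e1 : ∀ i, deriv q t i = D (0, Pi.single i 1) := fun i => by
    rw [← hqd i]; exact h1 t i
  have e2 : ∀ i, deriv p t i
      = - D (Pi.single i 1, 0) - ∑ j, B (q t) i j * deriv q t j
        + ∑ a, lam a t * η a (q t) i := fun i => by
    rw [← hpd i]
    simpa only [hqd] using h2 t i
  have e3 : ∀ i, ∑ j, η i (q t) j * deriv q t j = 0 := fun i => by
    simpa only [hqd] using h3 t i
  have hBzero : ∑ i, ∑ j, B (q t) i j * deriv q t j * deriv q t i = 0 := by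
    set S := ∑ i, ∑ j, B (q t) i j * deriv q t j * deriv q t i with hS
    have h0 : ∑ i, ∑ j, (B (q t) i j * deriv q t j * deriv q t i
        + B (q t) j i * deriv q t i * deriv q t j) = 0 :=
      Finset.sum_eq_zero fun i _ => Finset.sum_eq_zero fun j _ => by
        rw [hB (q t) i j]; ring
    have h1' : ∑ i, ∑ j, (B (q t) i j * deriv q t j * deriv q t i
        + B (q t) j i * deriv q t i * deriv q t j) = S + S := by
      simp only [Finset.sum_add_distrib]
      congr 1
      exact Finset.sum_comm.symm
    rw [h1'] at h0
    linarith
  have hlzero : ∑ i, ∑ a, lam a t * η a (q t) i * deriv q t i = 0 := by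
    rw [Finset.sum_comm]
    refine Finset.sum_eq_zero fun a _ => ?_
    calc ∑ i, lam a t * η a (q t) i * deriv q t i
        = lam a t * ∑ i, η a (q t) i * deriv q t i := by
          rw [Finset.mul_sum]; exact Finset.sum_congr rfl fun i _ => by ring
      _ = 0 := by rw [e3 a, mul_zero]
  calc (∑ i, deriv q t i * D (Pi.single i 1, 0))
        + ∑ i, deriv p t i * D (0, Pi.single i 1)
      = (∑ i, deriv q t i * D (Pi.single i 1, 0))
        + ∑ i, (- D (Pi.single i 1, 0) - ∑ j, B (q t) i j * deriv q t j
          + ∑ a, lam a t * η a (q t) i) * deriv q t i := by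
        congr 1
        refine Finset.sum_congr rfl fun i _ => ?_
        rw [e2 i, ← e1 i]
    _ = ∑ i, (- (∑ j, B (q t) i j * deriv q t j * deriv q t i)
          + ∑ a, lam a t * η a (q t) i * deriv q t i) := by
        rw [← Finset.sum_add_distrib]
        refine Finset.sum_congr rfl fun i _ => ?_
        rw [add_mul, sub_mul, Finset.sum_mul, Finset.sum_mul]
        ring
    _ = 0 := by
        rw [Finset.sum_add_distrib, Finset.sum_neg_distrib, hBzero, hlzero]
        ring
end

section
/- Let c > 0 and let v, ω, p_v, p_ω : ℝ → ℝ be differentiable curves satisfying the optimal control equations v' = cω² − c²ω²p_v + cωvp_ω, ω' = −ωv + cωvp_v − v²p_ω, p_v' = ωp_ω + vp_ω² − cωp_ωp_v, p_ω' = vp_ω − 2cωp_v + c²ωp_v² − cvp_ωp_v. Then the original energy E(t) = (1/2)·(v(t)²/c + ω(t)²) is constant in t. -/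
/-- Along the optimal control equations of the magnetically controlled Chaplygin sleigh,
the original energy `E = (1/2)(v²/c + ω²)` is conserved. -/
theorem chaplygin_optimal_flow_energy_conservation
    (c : ℝ) (hc : 0 < c) (v ω pv pω : ℝ → ℝ)
    (hv : Differentiable ℝ v) (hω : Differentiable ℝ ω)
    (hpv : Differentiable ℝ pv) (hpω : Differentiable ℝ pω)
    (h1 : ∀ t, deriv v t = c * (ω t) ^ 2 - c ^ 2 * (ω t) ^ 2 * pv t + c * ω t * v t * pω t)
    (h2 : ∀ t, deriv ω t = - ω t * v t + c * ω t * v t * pv t - (v t) ^ 2 * pω t)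
    (h3 : ∀ t, deriv pv t = ω t * pω t + v t * (pω t) ^ 2 - c * ω t * pω t * pv t)
    (h4 : ∀ t, deriv pω t = v t * pω t - 2 * c * ω t * pv t + c ^ 2 * ω t * (pv t) ^ 2
        - c * v t * pω t * pv t) :
    ∀ s t, (1 / 2) * ((v s) ^ 2 / c + (ω s) ^ 2)
         = (1 / 2) * ((v t) ^ 2 / c + (ω t) ^ 2) := by
  set E : ℝ → ℝ := fun t => (1 / 2) * ((v t) ^ 2 / c + (ω t) ^ 2) with hE
  have hdiff : Differentiable ℝ E := by
    apply Differentiable.const_mul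
    exact ((hv.pow 2).div_const c).add (hω.pow 2)
  have hderiv : ∀ t, deriv E t = 0 := by
    intro t
    have hv' := (hv t).hasDerivAt
    have hω' := (hω t).hasDerivAt
    have hEt : HasDerivAt E ((1/2) * ((2 * v t * deriv v t) / c + 2 * ω t * deriv ω t)) t := by
      have h1' : HasDerivAt (fun t => (v t) ^ 2 / c) ((2 * v t * deriv v t) / c) t := by
        simpa [mul_comm] using ((hv'.pow 2).div_const c)
      have h2' : HasDerivAt (fun t => (ω t) ^ 2) (2 * ω t * deriv ω t) t := by
        simpa [mul_comm] using (hω'.fun_pow 2)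
      exact (h1'.add h2').const_mul (1/2)
    rw [hEt.deriv, h1 t, h2 t]
    field_simp
    ring
  intro s t
  have := is_const_of_deriv_eq_zero hdiff hderiv s t
  simpa [hE] using this
end

section
/- Fix c > 0. Let E(v, ω, p_v, p_ω) = (1/2)(v²/c + ω²) and H_opt(v, ω, p_v, p_ω) = cω²p_v − (1/2)p_ω²v² − (1/2)c²ω²p_v² − ωp_ωv + cωp_ωp_vv be smooth functions on ℝ⁴, and let {F, G} = (∂F/∂v)(∂G/∂p_v) − (∂F/∂p_v)(∂G/∂v) + (∂F/∂ω)(∂G/∂p_ω) − (∂F/∂p_ω)(∂G/∂ω) be the canonical Poisson bracket on ℝ⁴ with coordinates (v, ω, p_v, p_ω). Then {E, H_opt} = 0 identically on ℝ⁴. -/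
/-- The pullback energy on `T*𝒟' ≅ ℝ⁴`. -/
noncomputable def sleighEnergy (c v ω pv pω : ℝ) : ℝ := (1 / 2) * (v ^ 2 / c + ω ^ 2)

/-- The optimal Hamiltonian of the magnetically controlled Chaplygin sleigh. -/
noncomputable def sleighHopt (c v ω pv pω : ℝ) : ℝ :=
  c * ω ^ 2 * pv - (1 / 2) * pω ^ 2 * v ^ 2 - (1 / 2) * c ^ 2 * ω ^ 2 * pv ^ 2
    - ω * pω * v + c * ω * pω * pv * v

private lemma deriv_quad (a b d x : ℝ) :
    deriv (fun t : ℝ => a * t + b * t ^ 2 + d) x = a + b * (2 * x) := by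
  have h : HasDerivAt (fun t : ℝ => a * t + b * t ^ 2 + d)
      (a * 1 + b * (↑2 * x ^ (2 - 1))) x :=
    (((hasDerivAt_id x).const_mul a).add ((hasDerivAt_pow 2 x).const_mul b)).add_const d
  have := h.deriv
  simpa using this.trans (by ring)

/-- The canonical Poisson bracket of `E` and `H_opt` vanishes identically on ℝ⁴. -/
theorem chaplygin_energy_poisson_commutes_with_Hopt (c : ℝ) (hc : 0 < c) :
    ∀ v ω pv pω : ℝ,
      (deriv (fun x => sleighEnergy c x ω pv pω) v)
          * (deriv (fun x => sleighHopt c v ω x pω) pv)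
        - (deriv (fun x => sleighEnergy c v ω x pω) pv)
          * (deriv (fun x => sleighHopt c x ω pv pω) v)
        + (deriv (fun x => sleighEnergy c v x pv pω) ω)
          * (deriv (fun x => sleighHopt c v ω pv x) pω)
        - (deriv (fun x => sleighEnergy c v ω pv x) pω)
          * (deriv (fun x => sleighHopt c v x pv pω) ω) = 0 := by
  intro v ω pv pω
  have hc' : c ≠ 0 := ne_of_gt hc
  have hE1 : deriv (fun x => sleighEnergy c x ω pv pω) v = v / c := by
    have e : (fun x => sleighEnergy c x ω pv pω)
        = fun x => 0 * x + (1 / (2 * c)) * x ^ 2 + (1 / 2) * ω ^ 2 := by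
      funext x; unfold sleighEnergy; field_simp; ring
    rw [e, deriv_quad]; field_simp; ring
  have hE2 : deriv (fun x => sleighEnergy c v ω x pω) pv = 0 := by
    have e : (fun x : ℝ => sleighEnergy c v ω x pω)
        = fun _ => sleighEnergy c v ω 0 pω := rfl
    rw [e, deriv_const]
  have hE3 : deriv (fun x => sleighEnergy c v x pv pω) ω = ω := by
    have e : (fun x => sleighEnergy c v x pv pω)
        = fun x => 0 * x + (1 / 2) * x ^ 2 + (1 / 2) * (v ^ 2 / c) := by
      funext x; unfold sleighEnergy; ring
    rw [e, deriv_quad]; ring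
  have hE4 : deriv (fun x => sleighEnergy c v ω pv x) pω = 0 := by
    have e : (fun x : ℝ => sleighEnergy c v ω pv x)
        = fun _ => sleighEnergy c v ω pv 0 := rfl
    rw [e, deriv_const]
  have hH1 : deriv (fun x => sleighHopt c v ω x pω) pv
      = (c * ω ^ 2 + c * ω * pω * v) + (-(1 / 2) * c ^ 2 * ω ^ 2) * (2 * pv) := by
    have e : (fun x => sleighHopt c v ω x pω)
        = fun x => (c * ω ^ 2 + c * ω * pω * v) * x + (-(1 / 2) * c ^ 2 * ω ^ 2) * x ^ 2
            + (-(1 / 2) * pω ^ 2 * v ^ 2 - ω * pω * v) := by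
      funext x; unfold sleighHopt; ring
    rw [e, deriv_quad]
  have hH2 : deriv (fun x => sleighHopt c x ω pv pω) v
      = (-(ω * pω) + c * ω * pω * pv) + (-(1 / 2) * pω ^ 2) * (2 * v) := by
    have e : (fun x => sleighHopt c x ω pv pω)
        = fun x => (-(ω * pω) + c * ω * pω * pv) * x + (-(1 / 2) * pω ^ 2) * x ^ 2
            + (c * ω ^ 2 * pv - (1 / 2) * c ^ 2 * ω ^ 2 * pv ^ 2) := by
      funext x; unfold sleighHopt; ring
    rw [e, deriv_quad]
  have hH3 : deriv (fun x => sleighHopt c v ω pv x) pω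
      = (-(v ^ 2) * pω) + (-(ω * v) + c * ω * pv * v) := by
    have e : (fun x => sleighHopt c v ω pv x)
        = fun x => (-(ω * v) + c * ω * pv * v) * x + (-(1 / 2) * v ^ 2) * x ^ 2
            + (c * ω ^ 2 * pv - (1 / 2) * c ^ 2 * ω ^ 2 * pv ^ 2) := by
      funext x; unfold sleighHopt; ring
    rw [e, deriv_quad]; ring
  have hH4 : deriv (fun x => sleighHopt c v x pv pω) ω
      = (-(pω * v) + c * pω * pv * v)
        + (c * pv - (1 / 2) * c ^ 2 * pv ^ 2) * (2 * ω) := by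
    have e : (fun x => sleighHopt c v x pv pω)
        = fun x => (-(pω * v) + c * pω * pv * v) * x
            + (c * pv - (1 / 2) * c ^ 2 * pv ^ 2) * x ^ 2
            + (-(1 / 2) * pω ^ 2 * v ^ 2) := by
      funext x; unfold sleighHopt; ring
    rw [e, deriv_quad]
  rw [hE1, hE2, hE3, hE4, hH1, hH2, hH3, hH4]
  field_simp
  ring
end

section
/- Let c > 0 and let α, B : ℝ → ℝ be functions with α twice differentiable and B differentiable, satisfying α'(t) = B(t)/c − sin α(t) and B'(t) = B(t)·cos α(t) for all t. Then α''(t) = (1/2)·sin(2·α(t)) for all t. In particular this holds for every value of c. -/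
/-- Eliminating `B` from `α̇ = B/c − sin α`, `Ḃ = B cos α` yields the nonlinear
pendulum equation `α̈ = (1/2) sin(2α)`, for every value of `c > 0`. -/
theorem chaplygin_reduced_pendulum_equation
    (c : ℝ) (hc : 0 < c) (α B : ℝ → ℝ)
    (hα : Differentiable ℝ α) (hα' : Differentiable ℝ (deriv α))
    (hB : Differentiable ℝ B)
    (h1 : ∀ t, deriv α t = B t / c - Real.sin (α t))
    (h2 : ∀ t, deriv B t = B t * Real.cos (α t)) :
    ∀ t, deriv (deriv α) t = (1 / 2) * Real.sin (2 * α t) := by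
  intro t
  have heq : deriv α = fun t => B t / c - Real.sin (α t) := funext h1
  have hd : deriv (deriv α) t
      = deriv B t / c - Real.cos (α t) * deriv α t := by
    rw [heq]
    have h1' : HasDerivAt (fun t => B t / c - Real.sin (α t))
        (deriv B t / c - Real.cos (α t) * deriv α t) t := by
      exact ((hB.differentiableAt.hasDerivAt.div_const c).sub
        ((Real.hasDerivAt_sin (α t)).comp t hα.differentiableAt.hasDerivAt))
    simpa [h1 t] using h1'.deriv
  rw [hd, h2 t, h1 t, Real.sin_two_mul]
  field_simp
  ring
end

section
/- Let c > 0 and let α, B : ℝ → ℝ be differentiable and satisfy α'(t) = B(t)/c − sin α(t) and B'(t) = B(t)·cos α(t) for all t. If B(0) > 0 and B(0) = 2c·sin α(0), then for all t ∈ ℝ: B(t) = 2c·sin α(t) and α'(t) = sin α(t). -/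
/-- The curve `B = 2c sin α` with `B > 0` is invariant under the reduced optimal control
system `α̇ = B/c − sin α`, `Ḃ = B cos α`, and on it the dynamics is `α̇ = sin α`. -/
theorem chaplygin_reduced_heteroclinic_invariant
    (c : ℝ) (hc : 0 < c) (α B : ℝ → ℝ)
    (hα : Differentiable ℝ α) (hB : Differentiable ℝ B)
    (h1 : ∀ t, deriv α t = B t / c - Real.sin (α t))
    (h2 : ∀ t, deriv B t = B t * Real.cos (α t))
    (hB0 : 0 < B 0) (hinit : B 0 = 2 * c * Real.sin (α 0)) :
    ∀ t : ℝ, B t = 2 * c * Real.sin (α t) ∧ deriv α t = Real.sin (α t) := by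
  have hcne : c ≠ 0 := ne_of_gt hc
  set G : ℝ → ℝ := fun t => B t - 2 * c * Real.sin (α t) with hG
  set v : ℝ → ℝ → ℝ := fun t x => -Real.cos (α t) * x with hv
  have hlip : ∀ t, LipschitzOnWith 1 (v t) Set.univ := by
    intro t
    apply LipschitzWith.lipschitzOnWith
    apply LipschitzWith.of_dist_le_mul
    intro x y
    simp only [hv, Real.dist_eq, NNReal.coe_one, one_mul]
    rw [← mul_sub, abs_mul, abs_neg]
    calc |Real.cos (α t)| * |x - y| ≤ 1 * |x - y| := by
          gcongr; exact Real.abs_cos_le_one _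
      _ = |x - y| := one_mul _
  have hGd : ∀ t, HasDerivAt G (v t (G t)) t := by
    intro t
    have hBd : HasDerivAt B (B t * Real.cos (α t)) t := by
      have := (hB t).hasDerivAt; rwa [h2 t] at this
    have hαd : HasDerivAt α (B t / c - Real.sin (α t)) t := by
      have := (hα t).hasDerivAt; rwa [h1 t] at this
    have hsd : HasDerivAt (fun t => 2 * c * Real.sin (α t))
        (2 * c * (Real.cos (α t) * (B t / c - Real.sin (α t)))) t := by
      exact ((Real.hasDerivAt_sin (α t)).comp t hαd).const_mul (2 * c)
    have : HasDerivAt G _ t := hBd.sub hsd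
    convert this using 1
    simp only [hv, hG]
    field_simp
    ring
  have hGzero : ∀ t, G t = 0 := by
    intro t
    have h0 : G 0 = 0 := by simp [hG, hinit]
    set b : ℝ := |t| + 1 with hb
    have hmem : (0 : ℝ) ∈ Set.Ioo (-b) b := by
      constructor <;> [nlinarith [abs_nonneg t]; nlinarith [abs_nonneg t]]
    have := ODE_solution_unique_of_mem_Icc (s := fun _ => Set.univ) (fun t _ => hlip t) hmem
      (Continuous.continuousOn (by
        have : Continuous G := (hB.continuous.sub (continuous_const.mul (Real.continuous_sin.comp hα.continuous))); exact this))
      (fun s _ => hGd s) (fun _ _ => trivial)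
      (continuousOn_const (c := (0:ℝ)))
      (fun s _ => by simpa [hv] using hasDerivAt_const s (0:ℝ))
      (fun _ _ => trivial) (by simpa using h0)
    have ht : t ∈ Set.Icc (-b) b := by
      constructor <;> [nlinarith [neg_abs_le t]; nlinarith [le_abs_self t]]
    simpa using this ht
  intro t
  have hBt : B t = 2 * c * Real.sin (α t) := by
    have := hGzero t; simp only [hG, sub_eq_zero] at this; exact this
  refine ⟨hBt, ?_⟩
  rw [h1 t, hBt]
  field_simp
  ring
end

section
/- Let c > 0 and let α, B : ℝ → ℝ be differentiable and satisfy α'(t) = B(t)/c − sin α(t) and B'(t) = B(t)·cos α(t) for all t, with B(0) > 0 and conserved value h := B(0)²/(2c) − B(0)·sin α(0) > 0. If there exists t₁ with α(t₁) = π/2, then B(t₁) > 2c. -/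
/-- Controllability bound: if the conserved value `h = B(0)²/(2c) − B(0) sin α(0)` is
positive and `B(0) > 0`, then whenever the trajectory reaches `α = π/2` the magnetic
field exceeds `2c`. -/
theorem chaplygin_reduced_minimum_field
    (c : ℝ) (hc : 0 < c) (α B : ℝ → ℝ)
    (hα : Differentiable ℝ α) (hB : Differentiable ℝ B)
    (h1 : ∀ t, deriv α t = B t / c - Real.sin (α t))
    (h2 : ∀ t, deriv B t = B t * Real.cos (α t))
    (hB0 : 0 < B 0)
    (hh : 0 < (B 0) ^ 2 / (2 * c) - B 0 * Real.sin (α 0)) :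
    ∀ t₁ : ℝ, α t₁ = Real.pi / 2 → 2 * c < B t₁ := by
  intro t₁ ht₁
  -- Step 1: B is everywhere positive.
  have hcont : Continuous fun s => Real.cos (α s) :=
    Real.continuous_cos.comp hα.continuous
  set F : ℝ → ℝ := fun t => ∫ s in (0:ℝ)..t, Real.cos (α s) with hF
  have hFderiv : ∀ t, HasDerivAt F (Real.cos (α t)) t := by
    intro t
    exact intervalIntegral.integral_hasDerivAt_right
      (hcont.intervalIntegrable 0 t) (hcont.stronglyMeasurableAtFilter _ _)
      hcont.continuousAt
  have hFdiff : Differentiable ℝ F := fun t => (hFderiv t).differentiableAt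
  set G : ℝ → ℝ := fun t => B t * Real.exp (-F t) with hG
  have hGderiv : ∀ t, HasDerivAt G 0 t := by
    intro t
    have hBd : HasDerivAt B (B t * Real.cos (α t)) t := by
      have := (hB t).hasDerivAt
      rwa [h2 t] at this
    have hEd : HasDerivAt (fun t => Real.exp (-F t))
        (Real.exp (-F t) * (-Real.cos (α t))) t := by
      have : HasDerivAt (fun t => -F t) (-Real.cos (α t)) t := (hFderiv t).neg
      exact (Real.hasDerivAt_exp (-F t)).comp t this
    have := hBd.mul hEd
    refine this.congr_deriv ?_
    ring
  have hGconst : ∀ t, G t = G 0 := by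
    intro t
    exact is_const_of_deriv_eq_zero (fun s => (hGderiv s).differentiableAt)
      (fun s => (hGderiv s).deriv) t 0
  have hBpos : ∀ t, 0 < B t := by
    intro t
    have h := hGconst t
    have h0 : G 0 = B 0 * Real.exp (-F 0) := rfl
    have hBt : B t * Real.exp (-F t) = B 0 * Real.exp (-F 0) := h
    have := mul_pos hB0 (Real.exp_pos (-F 0))
    rw [← hBt] at this
    have he := Real.exp_pos (-F t)
    nlinarith
  -- Step 2: the Hamiltonian is conserved.
  set H : ℝ → ℝ := fun t => (B t) ^ 2 / (2 * c) - B t * Real.sin (α t) with hH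
  have hHderiv : ∀ t, HasDerivAt H 0 t := by
    intro t
    have hBd : HasDerivAt B (B t * Real.cos (α t)) t := by
      have := (hB t).hasDerivAt
      rwa [h2 t] at this
    have hαd : HasDerivAt α (B t / c - Real.sin (α t)) t := by
      have := (hα t).hasDerivAt
      rwa [h1 t] at this
    have hsin : HasDerivAt (fun t => Real.sin (α t))
        (Real.cos (α t) * (B t / c - Real.sin (α t))) t :=
      (Real.hasDerivAt_sin (α t)).comp t hαd
    have hsq : HasDerivAt (fun t => (B t) ^ 2 / (2 * c))
        ((2 * B t * (B t * Real.cos (α t))) / (2 * c)) t :=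
      ((hBd.pow 2).div_const (2 * c)).congr_deriv (by ring)
    have := hsq.sub (hBd.mul hsin)
    refine this.congr_deriv ?_
    field_simp
    ring
  have hHconst : H t₁ = H 0 :=
    is_const_of_deriv_eq_zero (fun s => (hHderiv s).differentiableAt)
      (fun s => (hHderiv s).deriv) t₁ 0
  have hH1 : 0 < (B t₁) ^ 2 / (2 * c) - B t₁ := by
    have : H t₁ = (B t₁) ^ 2 / (2 * c) - B t₁ * Real.sin (α t₁) := rfl
    rw [ht₁, Real.sin_pi_div_two] at this
    have := hHconst
    simp only [hH] at this
    rw [ht₁, Real.sin_pi_div_two] at this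
    linarith [hh, this]
  have hBt₁ := hBpos t₁
  rw [lt_sub_iff_add_lt, zero_add, lt_div_iff₀ (by linarith : (0:ℝ) < 2 * c)] at hH1
  nlinarith
end

section
/- Let α, B : ℝ → ℝ be differentiable and satisfy α'(t) = B(t) − sin α(t) and B'(t) = B(t)·cos α(t) for all t (the reduced optimal system with c = 1). Suppose α(0) = 0 and B(0) = B₀ > 0. If there exists t₁ with α(t₁) = π/2 and B(t₁) > 0, then B(t₁) = 1 + √(1 + B₀²). -/
/-- For the reduced optimal system with `c = 1`, starting from `α(0) = 0` with field
`B(0) = B₀ > 0`, the value of the field when the trajectory reaches `α = π/2` (with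
`B > 0` there) is `1 + √(1 + B₀²)`. -/
theorem chaplygin_reduced_max_field
    (α B : ℝ → ℝ) (hα : Differentiable ℝ α) (hB : Differentiable ℝ B)
    (h1 : ∀ t, deriv α t = B t - Real.sin (α t))
    (h2 : ∀ t, deriv B t = B t * Real.cos (α t))
    (B₀ : ℝ) (hB₀ : 0 < B₀) (hα0 : α 0 = 0) (hB0 : B 0 = B₀) :
    ∀ t₁ : ℝ, α t₁ = Real.pi / 2 → 0 < B t₁ →
      B t₁ = 1 + Real.sqrt (1 + B₀ ^ 2) := by
  intro t₁ hα1 hB1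
  set f : ℝ → ℝ := fun t => B t ^ 2 / 2 - B t * Real.sin (α t) with hf
  have hderiv : ∀ t, HasDerivAt f 0 t := by
    intro t
    have hBd := (hB t).hasDerivAt
    have hαd := (hα t).hasDerivAt
    rw [h2 t] at hBd
    rw [h1 t] at hαd
    have hs : HasDerivAt (fun t => Real.sin (α t))
        (Real.cos (α t) * (B t - Real.sin (α t))) t :=
      (Real.hasDerivAt_sin (α t)).comp t hαd
    have h := ((hBd.pow 2).div_const 2).sub (hBd.mul hs)
    have h' : HasDerivAt f _ t := h
    refine h'.congr_deriv ?_
    norm_num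
    ring
  have hconst : f t₁ = f 0 :=
    is_const_of_deriv_eq_zero (fun t => (hderiv t).differentiableAt)
      (fun t => (hderiv t).deriv) t₁ 0
  have heq : B t₁ ^ 2 / 2 - B t₁ = B₀ ^ 2 / 2 := by
    have := hconst
    simp only [hf, hα0, hB0, hα1, Real.sin_pi_div_two, Real.sin_zero] at this
    linarith
  set s := Real.sqrt (1 + B₀ ^ 2) with hs
  have hs0 : 0 ≤ s := Real.sqrt_nonneg _
  have hs2 : s ^ 2 = 1 + B₀ ^ 2 := Real.sq_sqrt (by positivity)
  have hs1 : 1 ≤ s := by nlinarith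
  have hfac : (B t₁ - (1 + s)) * (B t₁ - (1 - s)) = 0 := by nlinarith
  rcases mul_eq_zero.mp hfac with h | h
  · linarith
  · nlinarith
end

section
/- Let α : ℝ → ℝ be differentiable with α'(t) = sin α(t) for all t and α(0) ∈ (0, π). Then the function t ↦ 2·sin²(α(t)) is integrable over ℝ and ∫_{−∞}^{∞} 2·sin²(α(t)) dt = 4. -/
open MeasureTheory Set Filter Topology Real

/-- If `h' = h² - 1`, `-1 ≤ h ≤ 1`, and `h → L` at `+∞`, then `L² ≥ 1`. -/
lemma aux_limit_sq {h : ℝ → ℝ} (hd : ∀ t, HasDerivAt h (h t ^ 2 - 1) t)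
    (hlb : ∀ t, -1 ≤ h t) (hub : ∀ t, h t ≤ 1) {L : ℝ}
    (hL : Tendsto h atTop (𝓝 L)) : 1 ≤ L ^ 2 := by
  by_contra hc
  push_neg at hc
  set ε : ℝ := (1 - L ^ 2) / 2 with hε
  have hε0 : 0 < ε := by rw [hε]; linarith
  have hT : Tendsto (fun t => h t ^ 2 - 1) atTop (𝓝 (L ^ 2 - 1)) :=
    ((hL.pow 2).sub_const 1)
  have hev : ∀ᶠ t in atTop, h t ^ 2 - 1 < -ε := by
    apply hT.eventually_lt_const
    simp [hε]; linarith
  obtain ⟨T, hTT⟩ := eventually_atTop.1 hev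
  set b : ℝ := T + 4 / ε with hb
  have hTb : T < b := by simp [hb]; positivity
  obtain ⟨c, hc1, hc2⟩ := exists_hasDerivAt_eq_slope h (fun t => h t ^ 2 - 1) hTb
    (fun x _ => (hd x).continuousAt.continuousWithinAt)
    (fun x _ => hd x)
  have hcε : h c ^ 2 - 1 < -ε := hTT c hc1.1.le
  have hbT : b - T = 4 / ε := by simp [hb]
  have : h b - h T = (h c ^ 2 - 1) * (b - T) := by
    rw [eq_div_iff (by linarith : b - T ≠ 0)] at hc2
    linarith [hc2]
  have h4 : h b - h T < -ε * (4 / ε) := by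
    rw [this, hbT]
    apply mul_lt_mul_of_pos_right hcε
    positivity
  rw [neg_mul, mul_div_assoc', mul_comm, mul_div_assoc, div_self hε0.ne', mul_one] at h4
  have := hlb b
  have := hub T
  linarith

open MeasureTheory in
/-- The total running cost `∫ (1/2)B² dt = ∫ 2 sin²α dt` of the heteroclinic orbit
`B = 2 sin α` (where `α̇ = sin α`, `α(0) ∈ (0, π)`) equals `4`. -/
theorem chaplygin_heteroclinic_cost
    (α : ℝ → ℝ) (hα : Differentiable ℝ α)
    (h1 : ∀ t, deriv α t = Real.sin (α t))
    (h0 : α 0 ∈ Set.Ioo 0 Real.pi) :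
    Integrable (fun t : ℝ => 2 * Real.sin (α t) ^ 2) ∧
    ∫ t : ℝ, 2 * Real.sin (α t) ^ 2 = 4 := by
  set h : ℝ → ℝ := fun t => Real.cos (α t) with hh
  have hαd : ∀ t, HasDerivAt α (Real.sin (α t)) t := fun t =>
    h1 t ▸ (hα t).hasDerivAt
  have hd : ∀ t, HasDerivAt h (h t ^ 2 - 1) t := by
    intro t
    have := (Real.hasDerivAt_cos (α t)).comp t (hαd t)
    refine this.congr_deriv ?_
    have := Real.sin_sq_add_cos_sq (α t)
    simp only [hh]; nlinarith
  have hlb : ∀ t, -1 ≤ h t := fun t => Real.neg_one_le_cos (α t)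
  have hub : ∀ t, h t ≤ 1 := fun t => Real.cos_le_one (α t)
  have hanti : Antitone h := by
    apply antitone_of_deriv_nonpos (fun t => (hd t).differentiableAt)
    intro t
    rw [(hd t).deriv]
    nlinarith [hlb t, hub t]
  -- h 0 strictly between -1 and 1
  have hmem : α 0 ∈ Icc 0 Real.pi := ⟨h0.1.le, h0.2.le⟩
  have h0lt : h 0 < 1 := by
    have := Real.strictAntiOn_cos ⟨le_rfl, Real.pi_pos.le⟩ hmem h0.1
    simpa [hh] using this
  have h0gt : -1 < h 0 := by
    have := Real.strictAntiOn_cos hmem ⟨Real.pi_pos.le, le_rfl⟩ h0.2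
    simpa [hh] using this
  -- limit at +∞
  obtain ⟨L, hLtop⟩ : ∃ L, Tendsto h atTop (𝓝 L) :=
    ⟨_, tendsto_atTop_ciInf hanti ⟨-1, fun x ⟨t, ht⟩ => ht ▸ hlb t⟩⟩
  have hLsq : 1 ≤ L ^ 2 := aux_limit_sq hd hlb hub hLtop
  have hLle : L ≤ h 0 := le_of_tendsto hLtop (eventually_atTop.2 ⟨0, fun t ht => hanti ht⟩)
  have hLge : -1 ≤ L := ge_of_tendsto hLtop (Eventually.of_forall hlb)
  have hL : L = -1 := by nlinarith
  subst hL
  -- limit at -∞ via reflection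
  set k : ℝ → ℝ := fun t => -h (-t) with hk
  have hkd : ∀ t, HasDerivAt k (k t ^ 2 - 1) t := by
    intro t
    have := ((hd (-t)).comp t (hasDerivAt_neg t)).neg
    refine this.congr_deriv ?_
    simp [hk]
  have hklb : ∀ t, -1 ≤ k t := fun t => by simpa [hk] using hub (-t)
  have hkub : ∀ t, k t ≤ 1 := fun t => by simpa [hk, neg_le] using hlb (-t)
  have hkanti : Antitone k := fun a b hab => by
    simp only [hk, neg_le_neg_iff]
    exact hanti (neg_le_neg hab)
  obtain ⟨M, hMtop⟩ : ∃ M, Tendsto k atTop (𝓝 M) :=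
    ⟨_, tendsto_atTop_ciInf hkanti ⟨-1, fun x ⟨t, ht⟩ => ht ▸ hklb t⟩⟩
  have hMsq : 1 ≤ M ^ 2 := aux_limit_sq hkd hklb hkub hMtop
  have hMle : M ≤ k 0 := le_of_tendsto hMtop (eventually_atTop.2 ⟨0, fun t ht => hkanti ht⟩)
  have hk0 : k 0 < 1 := by simp [hk]; linarith
  have hMge : -1 ≤ M := ge_of_tendsto hMtop (Eventually.of_forall hklb)
  have hM : M = -1 := by nlinarith
  subst hM
  have hhbot : Tendsto h atBot (𝓝 1) := by
    have : Tendsto (fun s => k (-s)) atBot (𝓝 (-1)) :=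
      hMtop.comp tendsto_neg_atBot_atTop
    have := this.neg
    simp only [hk, neg_neg] at this
    simpa using this
  -- antiderivative G = -2 cos α
  set f : ℝ → ℝ := fun t => 2 * Real.sin (α t) ^ 2 with hf
  set G : ℝ → ℝ := fun t => -2 * h t with hG
  have hGd : ∀ t, HasDerivAt G (f t) t := by
    intro t
    have := (hd t).const_mul (-2 : ℝ)
    refine this.congr_deriv ?_
    have := Real.sin_sq_add_cos_sq (α t)
    simp only [hf, hh]; nlinarith
  have hGtop : Tendsto G atTop (𝓝 2) := by
    have := hLtop.const_mul (-2 : ℝ)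
    simpa [hG] using this
  have hGbot : Tendsto G atBot (𝓝 (-2)) := by
    have := hhbot.const_mul (-2 : ℝ)
    simpa [hG] using this
  have hfpos : ∀ x ∈ Ioi (0:ℝ), 0 ≤ f x := fun x _ => by positivity
  -- Ioi part
  have hIoi_int : IntegrableOn f (Ioi 0) :=
    integrableOn_Ioi_deriv_of_nonneg' (fun x _ => hGd x) hfpos hGtop
  have hIoi_val : ∫ x in Ioi (0:ℝ), f x = 2 - G 0 :=
    integral_Ioi_of_hasDerivAt_of_nonneg' (fun x _ => hGd x) hfpos hGtop
  -- Iic part via reflection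
  set H : ℝ → ℝ := fun x => -G (-x) with hH
  have hHd : ∀ x, HasDerivAt H (f (-x)) x := by
    intro x
    have := ((hGd (-x)).comp x (hasDerivAt_neg x)).neg
    refine this.congr_deriv ?_
    ring
  have hHtop : Tendsto H atTop (𝓝 2) := by
    have : Tendsto (fun x => G (-x)) atTop (𝓝 (-2)) :=
      hGbot.comp tendsto_neg_atTop_atBot
    simpa [hH] using this.neg
  have hfneg : ∀ x ∈ Ioi (0:ℝ), 0 ≤ f (-x) := fun x _ => by positivity
  have hIoi_int' : IntegrableOn (fun x => f (-x)) (Ioi 0) :=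
    integrableOn_Ioi_deriv_of_nonneg' (fun x _ => hHd x) hfneg hHtop
  have hIoi_val' : ∫ x in Ioi (0:ℝ), f (-x) = 2 - H 0 :=
    integral_Ioi_of_hasDerivAt_of_nonneg' (fun x _ => hHd x) hfneg hHtop
  have hIic_int : IntegrableOn f (Iic 0) := by
    rw [integrableOn_Iic_iff_integrableOn_Iio]
    have := (MeasurePreserving.integrableOn_comp_preimage
      (Measure.measurePreserving_neg (volume : Measure ℝ))
      (Homeomorph.neg ℝ).measurableEmbedding (f := f) (s := Iio (0:ℝ))).1
    apply this
    have : (fun x : ℝ => -x) ⁻¹' (Iio (0:ℝ)) = Ioi 0 := by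
      ext x; simp
    rw [this]
    exact hIoi_int'
  have hIic_val : ∫ x in Iic (0:ℝ), f x = 2 + G 0 := by
    have := integral_comp_neg_Ioi (0:ℝ) f
    rw [neg_zero] at this
    rw [← this, hIoi_val']
    simp [hH]
  constructor
  · rw [← integrableOn_univ, ← Set.Iic_union_Ioi (a := (0:ℝ))]
    exact hIic_int.union hIoi_int
  · rw [← intervalIntegral.integral_Iic_add_Ioi hIic_int hIoi_int, hIic_val, hIoi_val]
    ring
end
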